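/- For every probability measure μ on the projective Hilbert space (with its Borel σ-algebra), there exists a unique density operator W_μ such that tr(W_μ A) = ∫ tr(PA) dμ(P) for all bounded self-adjoint operators A. -/

import Mathlib

open MeasureTheory Topology Filter

/-- The rank-one operator `|φ⟩⟨φ|`. -/
noncomputable def rankOne {H : Type*} [NormedAddCommGroup H] [InnerProductSpace ℂ H]
    (φ : H) : H →L[ℂ] H := (innerSL ℂ φ).smulRight φ

/-- The set of rank-one orthogonal projections (pure states / projective Hilbert space). -/
noncomputable def projSet (H : Type*) [NormedAddCommGroup H] [InnerProductSpace ℂ H] :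
    Set (H →L[ℂ] H) := {T | ∃ φ : H, ‖φ‖ = 1 ∧ T = rankOne φ}

/-- The trace of an operator computed along a Hilbert basis. -/
noncomputable def traceAlong {H ι : Type*} [NormedAddCommGroup H] [InnerProductSpace ℂ H]
    (b : HilbertBasis ι ℂ H) (A : H →L[ℂ] H) : ℂ :=
  ∑' i, inner ℂ (b i) (A (b i))

/-- `W` is a density operator: positive, trace class, with trace one
(trace computed along the Hilbert basis `b`). -/
noncomputable def IsDensityOp {H ι : Type*} [NormedAddCommGroup H] [InnerProductSpace ℂ H]
    [CompleteSpace H] (b : HilbertBasis ι ℂ H) (W : H →L[ℂ] H) : Prop :=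
  W.IsPositive ∧ HasSum (fun i => (inner ℂ (b i) (W (b i)) : ℂ)) 1

section aux
variable {H ι : Type*} [NormedAddCommGroup H] [InnerProductSpace ℂ H]
local notation "⟪" x ", " y "⟫" => @inner ℂ _ _ x y

lemma rankOne_apply (φ x : H) : rankOne φ x = ⟪φ, x⟫ • φ := rfl

lemma continuous_rankOne : Continuous (rankOne (H := H)) := by
  have h : (rankOne (H := H)) = fun φ => ContinuousLinearMap.smulRightL ℂ H H (innerSL ℂ φ) φ := rfl
  rw [h]
  exact (ContinuousLinearMap.smulRightL ℂ H H).continuous₂.comp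
    ((innerSL ℂ).continuous.prodMk continuous_id)

lemma norm_rankOne (φ : H) : ‖rankOne φ‖ = ‖φ‖ * ‖φ‖ := by
  rw [rankOne, ContinuousLinearMap.norm_smulRight_apply, innerSL_apply_norm]

lemma isSelfAdjoint_rankOne [CompleteSpace H] (ψ : H) : IsSelfAdjoint (rankOne ψ) := by
  rw [ContinuousLinearMap.isSelfAdjoint_iff_isSymmetric]
  intro x y
  simp only [ContinuousLinearMap.coe_coe, rankOne_apply, inner_smul_left, inner_smul_right,
    inner_conj_symm]
  ring

lemma countable_index [SecondCountableTopology H] (b : HilbertBasis ι ℂ H) : Countable ι := by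
  have hd : ∀ i j : ι, i ≠ j → (1 : ℝ) ≤ dist (b i) (b j) := by
    intro i j hij
    have h2 : dist (b i) (b j) ^ 2 = 2 := by
      rw [dist_eq_norm, @norm_sub_sq ℂ]
      simp [b.orthonormal.1, b.orthonormal.2 hij]; norm_num
    nlinarith [dist_nonneg (x := b i) (y := b j)]
  have h : Pairwise (Function.onFun Disjoint fun i => Metric.ball (b i) (1/2)) := by
    intro i j hij
    exact Metric.ball_disjoint_ball (by linarith [hd i j hij])
  exact h.countable_of_isOpen_disjoint (fun i => Metric.isOpen_ball)
    (fun i => ⟨b i, by simp⟩)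

lemma hasSum_norm_inner_sq [CompleteSpace H] (b : HilbertBasis ι ℂ H) (ψ : H) :
    HasSum (fun i => ‖⟪b i, ψ⟫‖ ^ 2) (‖ψ‖ ^ 2) := by
  have h := (b.hasSum_inner_mul_inner ψ ψ).mapL Complex.reCLM
  simp only [Complex.reCLM_apply] at h
  convert h using 2 with i
  · rw [show ⟪ψ, b i⟫ = (starRingEnd ℂ) ⟪b i, ψ⟫ from (inner_conj_symm _ _).symm,
      RCLike.conj_mul]
    norm_cast
  · rw [inner_self_eq_norm_sq_to_K]
    norm_cast

lemma tsum_ennreal_inner_sq [CompleteSpace H] (b : HilbertBasis ι ℂ H) (ψ : H) :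
    ∑' i, (‖⟪b i, ψ⟫‖₊ : ENNReal) ^ 2 = (‖ψ‖₊ : ENNReal) ^ 2 := by
  have h := hasSum_norm_inner_sq b ψ
  have h2 := ENNReal.ofReal_tsum_of_nonneg (fun i => by positivity) h.summable
  rw [h.tsum_eq] at h2
  calc ∑' i, (‖⟪b i, ψ⟫‖₊ : ENNReal) ^ 2
      = ∑' i, ENNReal.ofReal (‖⟪b i, ψ⟫‖ ^ 2) := by
        simp_rw [ENNReal.ofReal_pow (norm_nonneg _), ofReal_norm, enorm_eq_nnnorm]
    _ = ENNReal.ofReal (‖ψ‖ ^ 2) := h2.symm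
    _ = (‖ψ‖₊ : ENNReal) ^ 2 := by
        rw [ENNReal.ofReal_pow (norm_nonneg _), ofReal_norm, enorm_eq_nnnorm]

lemma mul_le_sq_add_sq (a c : ENNReal) : a * c ≤ a ^ 2 + c ^ 2 := by
  rcases le_total a c with h | h
  · calc a * c ≤ c * c := mul_le_mul_left h c
    _ = c ^ 2 := (sq c).symm
    _ ≤ a ^ 2 + c ^ 2 := le_add_self
  · calc a * c ≤ a * a := mul_le_mul_right h a
    _ = a ^ 2 := (sq a).symm
    _ ≤ a ^ 2 + c ^ 2 := le_self_add

/-- Trace of `V * rankOne ψ` along a basis is `⟪ψ, V ψ⟫`. -/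
lemma traceAlong_mul_rankOne [CompleteSpace H] (b : HilbertBasis ι ℂ H) (V : H →L[ℂ] H) (ψ : H) :
    traceAlong b (V * rankOne ψ) = ⟪ψ, V ψ⟫ := by
  have h : ∀ i, ⟪b i, (V * rankOne ψ) (b i)⟫ = ⟪ψ, b i⟫ * ⟪b i, V ψ⟫ := by
    intro i
    rw [ContinuousLinearMap.mul_apply, rankOne_apply, _root_.map_smul, inner_smul_right]
  unfold traceAlong
  calc (∑' i, ⟪b i, (V * rankOne ψ) (b i)⟫) = ∑' i, ⟪ψ, b i⟫ * ⟪b i, V ψ⟫ := by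
        exact tsum_congr h
    _ = ⟪ψ, V ψ⟫ := (b.hasSum_inner_mul_inner ψ (V ψ)).tsum_eq
end aux

theorem stmt12 {H ι : Type*} [NormedAddCommGroup H] [InnerProductSpace ℂ H] [CompleteSpace H]
    [Nontrivial H] [SecondCountableTopology H] (b : HilbertBasis ι ℂ H)
    [MeasurableSpace ↥(projSet H)] [BorelSpace ↥(projSet H)]
    (μ : Measure ↥(projSet H)) [IsProbabilityMeasure μ] :
    ∃! W : H →L[ℂ] H, IsDensityOp b W ∧
      ∀ A : H →L[ℂ] H, IsSelfAdjoint A →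
        traceAlong b (W * A) = ∫ P, traceAlong b (P.1 * A) ∂μ := by
  classical
  haveI hcount : Countable ι := countable_index b
  haveI : TopologicalSpace.SeparableSpace ↥(projSet H) := by
    have hsub : projSet H ⊆ Set.range (rankOne (H := H)) := by
      rintro T ⟨φ, -, rfl⟩; exact ⟨φ, rfl⟩
    exact ((TopologicalSpace.isSeparable_range continuous_rankOne).mono hsub).separableSpace
  haveI hsc : SecondCountableTopology ↥(projSet H) :=
    UniformSpace.secondCountable_of_separable _
  haveI : SecondCountableTopologyEither ↥(projSet H) (H →L[ℂ] H) := ⟨Or.inl hsc⟩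
  set F : ↥(projSet H) → (H →L[ℂ] H) := Subtype.val with hF
  have hFcont : Continuous F := continuous_subtype_val
  obtain ⟨φf, hφf⟩ : ∃ f : ↥(projSet H) → H,
      ∀ P, ‖f P‖ = 1 ∧ (P : H →L[ℂ] H) = rankOne (f P) :=
    ⟨fun P => (P.2).choose, fun P => (P.2).choose_spec⟩
  have hFint : Integrable F μ := by
    refine (integrable_const (1 : ℝ)).mono'
      hFcont.stronglyMeasurable.aestronglyMeasurable ?_
    refine Eventually.of_forall (fun P => ?_)
    rw [show F P = rankOne (φf P) from (hφf P).2, norm_rankOne, (hφf P).1]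
    norm_num
  set W : H →L[ℂ] H := ∫ P, F P ∂μ with hW
  have hInner : ∀ x y : H, (inner ℂ x (W y) : ℂ) = ∫ P, (inner ℂ x (F P y) : ℂ) ∂μ := by
    intro x y
    have h := (((innerSL ℂ x).comp
      (ContinuousLinearMap.apply ℂ H y)).integral_comp_comm hFint).symm
    simpa using h
  -- the trace identity for any self-adjoint A
  have key : ∀ A : H →L[ℂ] H, IsSelfAdjoint A →
      traceAlong b (W * A) = ∫ P, traceAlong b ((P : H →L[ℂ] H) * A) ∂μ := by
    intro A hA
    set g : ι → ↥(projSet H) → ℂ := fun i P => inner ℂ (b i) (F P (A (b i))) with hg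
    have hmeasg : ∀ i, AEStronglyMeasurable (g i) μ := by
      intro i
      exact (continuous_const.inner
        (((ContinuousLinearMap.apply ℂ H (A (b i))).continuous).comp
          hFcont)).aestronglyMeasurable
    have hgval : ∀ P i, g i P = inner ℂ (A (φf P)) (b i) * inner ℂ (b i) (φf P) := by
      intro P i
      have h1 : F P (A (b i)) = (inner ℂ (φf P) (A (b i)) : ℂ) • φf P := by
        rw [show F P = rankOne (φf P) from (hφf P).2]; rfl
      show (inner ℂ (b i) (F P (A (b i))) : ℂ) = _
      rw [h1, inner_smul_right,
        show (inner ℂ (φf P) (A (b i)) : ℂ) = inner ℂ (A (φf P)) (b i) from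
          ((ContinuousLinearMap.isSelfAdjoint_iff_isSymmetric.mp hA) (φf P) (b i)).symm]
    have hbound : ∀ P, ∑' i, (‖g i P‖₊ : ENNReal) ≤ (‖A‖₊ : ENNReal) ^ 2 + 1 := by
      intro P
      have hb : ∀ i, (‖g i P‖₊ : ENNReal) ≤
          (‖(inner ℂ (b i) (A (φf P)) : ℂ)‖₊ : ENNReal) ^ 2 +
          (‖(inner ℂ (b i) (φf P) : ℂ)‖₊ : ENNReal) ^ 2 := by
        intro i
        rw [hgval P i]
        calc (‖(inner ℂ (A (φf P)) (b i) : ℂ) * inner ℂ (b i) (φf P)‖₊ : ENNReal)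
            = (‖(inner ℂ (A (φf P)) (b i) : ℂ)‖₊ : ENNReal) *
              (‖(inner ℂ (b i) (φf P) : ℂ)‖₊ : ENNReal) := by
              rw [nnnorm_mul]; push_cast; ring
          _ = (‖(inner ℂ (b i) (A (φf P)) : ℂ)‖₊ : ENNReal) *
              (‖(inner ℂ (b i) (φf P) : ℂ)‖₊ : ENNReal) := by
              have : ‖(inner ℂ (A (φf P)) (b i) : ℂ)‖₊ = ‖(inner ℂ (b i) (A (φf P)) : ℂ)‖₊ :=
                NNReal.coe_injective (by simpa using norm_inner_symm (𝕜 := ℂ) (A (φf P)) (b i))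
              rw [this]
          _ ≤ _ := mul_le_sq_add_sq _ _
      calc ∑' i, (‖g i P‖₊ : ENNReal)
          ≤ ∑' i, ((‖(inner ℂ (b i) (A (φf P)) : ℂ)‖₊ : ENNReal) ^ 2 +
              (‖(inner ℂ (b i) (φf P) : ℂ)‖₊ : ENNReal) ^ 2) := ENNReal.tsum_le_tsum hb
        _ = (‖A (φf P)‖₊ : ENNReal) ^ 2 + (‖φf P‖₊ : ENNReal) ^ 2 := by
            rw [ENNReal.tsum_add, tsum_ennreal_inner_sq, tsum_ennreal_inner_sq]
        _ ≤ (‖A‖₊ : ENNReal) ^ 2 + 1 := by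
            have h1 : ‖A (φf P)‖ ≤ ‖A‖ := by
              simpa [(hφf P).1] using A.le_opNorm (φf P)
            have h2 : (‖φf P‖₊ : ENNReal) = 1 := by
              have h3 : ‖φf P‖₊ = 1 := NNReal.coe_injective (by simp [(hφf P).1])
              rw [h3]; norm_num
            rw [h2, one_pow]
            gcongr
            exact_mod_cast h1
    have hfin : ∑' i, ∫⁻ P, ‖g i P‖₊ ∂μ ≠ ⊤ := by
      simp_rw [← enorm_eq_nnnorm]
      rw [← lintegral_tsum (fun i => (hmeasg i).enorm)]
      refine ne_of_lt (lt_of_le_of_lt (lintegral_mono hbound) ?_)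
      rw [lintegral_const, measure_univ, mul_one]
      exact ENNReal.add_lt_top.mpr ⟨ENNReal.pow_lt_top ENNReal.coe_lt_top, ENNReal.one_lt_top⟩
    have hswap := integral_tsum hmeasg hfin
    have hlhs : traceAlong b (W * A) = ∑' i, ∫ P, g i P ∂μ := by
      unfold traceAlong
      exact tsum_congr fun i => by
        rw [ContinuousLinearMap.mul_apply]; exact hInner (b i) (A (b i))
    have hrhs : ∀ P : ↥(projSet H), traceAlong b ((P : H →L[ℂ] H) * A) = ∑' i, g i P := by
      intro P
      unfold traceAlong
      exact tsum_congr fun i => by rw [ContinuousLinearMap.mul_apply]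
    rw [hlhs, ← hswap]
    exact integral_congr_ae (Eventually.of_forall fun P => (hrhs P).symm)
  -- positivity
  have hposW : W.IsPositive := by
    rw [ContinuousLinearMap.isPositive_iff_complex]
    intro x
    have hpt : ∀ P : ↥(projSet H),
        (inner ℂ x (F P x) : ℂ) = ((‖(inner ℂ x (φf P) : ℂ)‖ ^ 2 : ℝ) : ℂ) := by
      intro P
      have h1 : F P x = (inner ℂ (φf P) x : ℂ) • φf P := by
        rw [show F P = rankOne (φf P) from (hφf P).2]; rfl
      rw [h1, inner_smul_right,
        show (inner ℂ (φf P) x : ℂ) = (starRingEnd ℂ) (inner ℂ x (φf P) : ℂ) from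
          (inner_conj_symm _ _).symm, RCLike.conj_mul]
      norm_cast
    have hx : (inner ℂ x (W x) : ℂ)
        = ((∫ P, ‖(inner ℂ x (φf P) : ℂ)‖ ^ 2 ∂μ : ℝ) : ℂ) := by
      rw [hInner x x, integral_congr_ae (Eventually.of_forall hpt)]
      exact integral_ofReal
    have hWx : (inner ℂ (W x) x : ℂ)
        = ((∫ P, ‖(inner ℂ x (φf P) : ℂ)‖ ^ 2 ∂μ : ℝ) : ℂ) := by
      rw [show (inner ℂ (W x) x : ℂ) = (starRingEnd ℂ) (inner ℂ x (W x) : ℂ) from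
        (inner_conj_symm _ _).symm, hx, Complex.conj_ofReal]
    constructor
    · rw [hWx]; norm_cast
    · rw [hWx]
      simpa using integral_nonneg (μ := μ) fun P => by positivity
  -- trace one
  have htr1 : HasSum (fun i => (inner ℂ (b i) (W (b i)) : ℂ)) 1 := by
    have h1 := key 1 (IsSelfAdjoint.one _)
    have h2 : ∀ P : ↥(projSet H), traceAlong b ((P : H →L[ℂ] H) * 1) = 1 := by
      intro P
      rw [mul_one, (hφf P).2, ← one_mul (rankOne (φf P)), traceAlong_mul_rankOne]
      simp only [ContinuousLinearMap.one_apply]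
      rw [inner_self_eq_norm_sq_to_K, (hφf P).1]
      norm_num
    have h3 : traceAlong b (W * 1) = 1 := by
      rw [h1, integral_congr_ae (Eventually.of_forall h2), integral_const, probReal_univ]
      simp
    rw [mul_one] at h3
    have h4 : ∑' i, (inner ℂ (b i) (W (b i)) : ℂ) = 1 := h3
    have hsumm : Summable fun i => (inner ℂ (b i) (W (b i)) : ℂ) := by
      by_contra hs
      rw [tsum_eq_zero_of_not_summable hs] at h4
      exact one_ne_zero h4.symm
    exact (Summable.hasSum_iff hsumm).mpr h4
  refine ⟨W, ⟨⟨hposW, htr1⟩, fun A hA => key A hA⟩, ?_⟩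
  rintro W' ⟨⟨hpos', htr'⟩, hW'⟩
  have hinner_eq : ∀ ψ : H, (inner ℂ ((W' - W) ψ) ψ : ℂ) = 0 := by
    intro ψ
    have h1 := hW' (rankOne ψ) (isSelfAdjoint_rankOne ψ)
    have h2 := key (rankOne ψ) (isSelfAdjoint_rankOne ψ)
    have h3 : traceAlong b (W' * rankOne ψ) = traceAlong b (W * rankOne ψ) := by rw [h1, h2]
    rw [traceAlong_mul_rankOne, traceAlong_mul_rankOne] at h3
    have h4 : (inner ℂ ψ ((W' - W) ψ) : ℂ) = 0 := by
      rw [ContinuousLinearMap.sub_apply, inner_sub_right, h3, sub_self]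
    rw [show (inner ℂ ((W' - W) ψ) ψ : ℂ) = (starRingEnd ℂ) (inner ℂ ψ ((W' - W) ψ) : ℂ) from
      (inner_conj_symm _ _).symm, h4, map_zero]
  have h5 : ((W' - W : H →L[ℂ] H) : H →ₗ[ℂ] H) = 0 :=
    (inner_map_self_eq_zero _).mp fun ψ => hinner_eq ψ
  have h6 : W' - W = 0 := by
    ext ψ
    have := LinearMap.ext_iff.mp h5 ψ
    simpa using this
  exact sub_eq_zero.mp h6
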